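/- Let F be the multiclass queueing operator as above, with arrival process a (values in {1,…,m,∞}) and service process s (values in {1,∞}), d = F(a,s). Suppose s(i−1) = ∞ and s(i) = 1, and set b = i. Then F(a^{(i−1,i)}, s^{(i−1,i)}) = d^{(i−1,i)}. -/

import Mathlib

open scoped Classical
set_option maxHeartbeats 1000000

/-- `QLen a s k j v`: `v` is the queue-length `Q_j^{≤k}`, i.e. the (finite, attained)
supremum over `i ≤ j` of `[#{r∈[i,j] : a(r) ≤ k} − #{r∈[i,j] : s(r)=1}]_+`. -/
def QLen (a s : ℤ → ℕ∞) (k : ℕ) (j : ℤ) (v : ℤ) : Prop :=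
  IsGreatest
    {w : ℤ | ∃ i ≤ j, w = max 0
      (({r : ℤ | r ∈ Set.Icc i j ∧ a r ≤ (k : ℕ∞)}.ncard : ℤ)
        - ({r : ℤ | r ∈ Set.Icc i j ∧ s r = 1}.ncard : ℤ))} v

/-- `isOutput m a s d`: `d` is the departure process `F_m(a,s)` of the multiclass
priority queue with arrival process `a` (classes `1,…,m` and holes `∞`) and service
process `s` (values `1` and `∞`): all queue-lengths `Q_j^{≤k}` are finite, `d(j) = ∞`
iff `s(j) = ∞`; for `1 ≤ k ≤ m`, `d(j) ≤ k` iff `s(j)=1` and (`Q_{j−1}^{≤k} > 0` or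
`a(j) ≤ k`); `d(j) = m+1` when `s(j)=1`, `Q_{j−1}^{≤m} = 0` and `a(j) = ∞`; and `d`
takes values in `{1,…,m+1,∞}`. -/
def isOutput (m : ℕ) (a s d : ℤ → ℕ∞) : Prop :=
  ∃ Q : ℤ → ℕ → ℤ,
    (∀ (j : ℤ) (k : ℕ), QLen a s k j (Q j k)) ∧
    ∀ j : ℤ,
      (d j = ⊤ ↔ s j = ⊤) ∧
      (∀ k : ℕ, 1 ≤ k → k ≤ m →
        (d j ≤ (k : ℕ∞) ↔ s j = 1 ∧ (0 < Q (j - 1) k ∨ a j ≤ (k : ℕ∞)))) ∧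
      (s j = 1 ∧ Q (j - 1) m = 0 ∧ a j = ⊤ → d j = ((m + 1 : ℕ) : ℕ∞)) ∧
      (d j = ⊤ ∨ ((1 : ℕ∞) ≤ d j ∧ d j ≤ ((m + 1 : ℕ) : ℕ∞)))

/-- The TASEP swap `u^{(i−1,i)}`: put `min(u(i−1),u(i))` at `i−1` and the max at `i`
(`∞ = ⊤` is larger than every integer). -/
noncomputable def swapPair (u : ℤ → ℕ∞) (i : ℤ) : ℤ → ℕ∞ :=
  fun j => if j = i - 1 then min (u (i - 1)) (u i)
           else if j = i then max (u (i - 1)) (u i)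
           else u j

open Classical in
noncomputable def cnt (P : ℤ → Prop) (i j : ℤ) : ℤ :=
  (((Finset.Icc i j).filter P).card : ℤ)

lemma ncard_eq_cnt (P : ℤ → Prop) (i j : ℤ) :
    ({r : ℤ | r ∈ Set.Icc i j ∧ P r}.ncard : ℤ) = cnt P i j := by
  classical
  have : {r : ℤ | r ∈ Set.Icc i j ∧ P r} = ↑((Finset.Icc i j).filter P) := by
    ext r
    simp [Finset.mem_filter, Set.mem_Icc]
  rw [this, Set.ncard_coe_finset, cnt]

lemma QLen_iff (a s : ℤ → ℕ∞) (k : ℕ) (j : ℤ) (v : ℤ) :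
    QLen a s k j v ↔ IsGreatest
      {w : ℤ | ∃ i ≤ j, w = max 0
        (cnt (fun r => a r ≤ (k : ℕ∞)) i j - cnt (fun r => s r = 1) i j)} v := by
  unfold QLen
  congr! 3 with w
  simp only [ncard_eq_cnt]

lemma cnt_succ (P : ℤ → Prop) (i j : ℤ) (h : i ≤ j) :
    cnt P i j = cnt P i (j-1) + (if P j then 1 else 0) := by
  classical
  have hI : Finset.Icc i j = insert j (Finset.Icc i (j-1)) := by
    ext r; simp [Finset.mem_Icc]; omega
  have hj : j ∉ Finset.Icc i (j-1) := by simp [Finset.mem_Icc]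
  rw [cnt, cnt, hI, Finset.filter_insert]
  by_cases hP : P j
  · rw [if_pos hP, Finset.card_insert_of_notMem (by simp [Finset.mem_filter, hj]), if_pos hP]
    push_cast; ring
  · rw [if_neg hP, if_neg hP]; ring

lemma cnt_self (P : ℤ → Prop) (j : ℤ) :
    cnt P j j = (if P j then 1 else 0) := by
  classical
  rw [cnt]
  by_cases hP : P j <;> simp [Finset.filter_singleton, hP]

lemma cnt_congr {P Q : ℤ → Prop} {i j : ℤ} (h : ∀ r, i ≤ r → r ≤ j → (P r ↔ Q r)) :
    cnt P i j = cnt Q i j := by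
  unfold cnt
  congr 1
  congr 1
  apply Finset.filter_congr
  intro r hr
  rw [Finset.mem_Icc] at hr
  exact h r hr.1 hr.2

lemma qlen_unique {a s : ℤ → ℕ∞} {k : ℕ} {j v w : ℤ}
    (h1 : QLen a s k j v) (h2 : QLen a s k j w) : v = w :=
  h1.unique h2

lemma qlen_nonneg {a s : ℤ → ℕ∞} {k : ℕ} {j v : ℤ} (h : QLen a s k j v) : 0 ≤ v := by
  obtain ⟨i, hi, hw⟩ := h.1
  rw [hw]; exact le_max_left _ _

lemma qlen_rec {a s : ℤ → ℕ∞} {k : ℕ} {j : ℤ} {u : ℤ} (h : QLen a s k (j-1) u) :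
    QLen a s k j (max 0 (u + ((if a j ≤ (k:ℕ∞) then 1 else 0) - (if s j = 1 then 1 else 0)))) := by
  rw [QLen_iff] at h ⊢
  have hu0 : 0 ≤ u := by
    obtain ⟨i, hi, hw⟩ := h.1; rw [hw]; exact le_max_left _ _
  constructor
  · obtain ⟨i0, hi0, hw⟩ := h.1
    by_cases hpos : 0 ≤ cnt (fun r => a r ≤ (k:ℕ∞)) i0 (j-1) - cnt (fun r => s r = 1) i0 (j-1)
    · refine ⟨i0, by omega, ?_⟩
      rw [cnt_succ _ i0 j (by omega), cnt_succ (fun r => s r = 1) i0 j (by omega)]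
      split_ifs <;> omega
    · refine ⟨j, le_refl _, ?_⟩
      rw [cnt_self, cnt_self]
      split_ifs <;> omega
  · rintro w ⟨i1, hi1, hw⟩
    rcases eq_or_lt_of_le hi1 with heq | hlt
    · subst heq
      rw [cnt_self, cnt_self] at hw
      rw [hw]
      split_ifs <;> omega
    · have hi1' : i1 ≤ j - 1 := by omega
      have hmem : max 0 (cnt (fun r => a r ≤ (k:ℕ∞)) i1 (j-1) - cnt (fun r => s r = 1) i1 (j-1)) ≤ u :=
        h.2 ⟨i1, hi1', rfl⟩
      rw [hw, cnt_succ _ i1 j (by omega), cnt_succ (fun r => s r = 1) i1 j (by omega)]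
      split_ifs <;> omega

lemma qlen_congr {a a' s s' : ℤ → ℕ∞} {k : ℕ} {j : ℤ} {v : ℤ}
    (haa : ∀ r, r ≤ j → a' r = a r) (hss : ∀ r, r ≤ j → s' r = s r)
    (h : QLen a' s' k j v) : QLen a s k j v := by
  rw [QLen_iff] at h ⊢
  have hca : ∀ i' : ℤ, cnt (fun r => a' r ≤ (k:ℕ∞)) i' j = cnt (fun r => a r ≤ (k:ℕ∞)) i' j :=
    fun i' => cnt_congr (fun r _ h2 => by rw [haa r h2])
  have hcs : ∀ i' : ℤ, cnt (fun r => s' r = 1) i' j = cnt (fun r => s r = 1) i' j :=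
    fun i' => cnt_congr (fun r _ h2 => by rw [hss r h2])
  have hset : {w : ℤ | ∃ i ≤ j, w = max 0
        (cnt (fun r => a' r ≤ (k : ℕ∞)) i j - cnt (fun r => s' r = 1) i j)} =
      {w : ℤ | ∃ i ≤ j, w = max 0
        (cnt (fun r => a r ≤ (k : ℕ∞)) i j - cnt (fun r => s r = 1) i j)} := by
    ext w
    constructor
    · rintro ⟨i, hi, hw⟩; exact ⟨i, hi, by rw [hw, hca, hcs]⟩
    · rintro ⟨i, hi, hw⟩; exact ⟨i, hi, by rw [hw, ← hca, ← hcs]⟩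
  rwa [hset] at h

lemma val_le (m : ℕ) (x y : ℕ) (P : ℕ → Prop)
    (hx2 : ∀ k, 1 ≤ k → k ≤ m → (x ≤ k ↔ P k))
    (hy2 : ∀ k, 1 ≤ k → k ≤ m → (y ≤ k ↔ P k))
    (hx3 : x ≤ m+1) (hy1 : 1 ≤ y) : x ≤ y := by
  by_contra h
  push_neg at h
  have h1 : y ≤ m := by omega
  have hP : P y := (hy2 y hy1 h1).1 le_rfl
  have := (hx2 y hy1 h1).2 hP
  omega

lemma val_eq (m : ℕ) (x y : ℕ∞) (P : ℕ → Prop)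
    (hx1 : x ≠ ⊤) (hy1 : y ≠ ⊤)
    (hx2 : ∀ k : ℕ, 1 ≤ k → k ≤ m → ((x ≤ (k:ℕ∞)) ↔ P k))
    (hy2 : ∀ k : ℕ, 1 ≤ k → k ≤ m → ((y ≤ (k:ℕ∞)) ↔ P k))
    (hx3 : (1:ℕ∞) ≤ x) (hx4 : x ≤ ((m+1 : ℕ):ℕ∞))
    (hy3 : (1:ℕ∞) ≤ y) (hy4 : y ≤ ((m+1 : ℕ):ℕ∞)) : x = y := by
  lift x to ℕ using hx1 with n
  lift y to ℕ using hy1 with p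
  have cast_iff : ∀ u v : ℕ, ((u:ℕ∞) ≤ (v:ℕ∞)) ↔ u ≤ v := by
    intro u v; constructor <;> intro h <;> exact_mod_cast h
  have hn2 : ∀ k, 1 ≤ k → k ≤ m → (n ≤ k ↔ P k) :=
    fun k h1 h2 => (cast_iff n k).symm.trans (hx2 k h1 h2)
  have hp2 : ∀ k, 1 ≤ k → k ≤ m → (p ≤ k ↔ P k) :=
    fun k h1 h2 => (cast_iff p k).symm.trans (hy2 k h1 h2)
  have h1n : 1 ≤ n := by exact_mod_cast hx3
  have h1p : 1 ≤ p := by exact_mod_cast hy3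
  have h2n : n ≤ m+1 := by exact_mod_cast hx4
  have h2p : p ≤ m+1 := by exact_mod_cast hy4
  have := val_le m n p P hn2 hp2 h2n h1p
  have := val_le m p n P hp2 hn2 h2p h1n
  congr 1
  omega

/-- Lemma 4.3, Case 2: if `s(i−1) = ∞` and `s(i) = 1` then, with `b = i`,
`F_m(a^{(i−1,i)}, s^{(i−1,i)}) = F_m(a,s)^{(i−1,i)}`. -/
theorem stmt_10 (m : ℕ) (a s d : ℤ → ℕ∞)
    (ha : ∀ j, a j = ⊤ ∨ ((1 : ℕ∞) ≤ a j ∧ a j ≤ ((m : ℕ) : ℕ∞)))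
    (hs : ∀ j, s j = 1 ∨ s j = ⊤)
    (hd : isOutput m a s d)
    (i : ℤ) (hs1 : s (i - 1) = ⊤) (hs2 : s i = 1) :
    ∀ d' : ℤ → ℕ∞,
      isOutput m (swapPair a i) (swapPair s i) d' → d' = swapPair d i := by
  intro d' hd'
  obtain ⟨Q, hQ, hcond⟩ := hd
  obtain ⟨Q', hQ', hcond'⟩ := hd'
  have hii : (i : ℤ) ≠ i - 1 := by omega
  -- values of the swapped processes
  have ha'1 : swapPair a i (i-1) = min (a (i-1)) (a i) := by simp [swapPair]
  have ha'2 : swapPair a i i = max (a (i-1)) (a i) := by simp [swapPair, hii]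
  have ha'3 : ∀ r, r ≠ i-1 → r ≠ i → swapPair a i r = a r := by
    intro r h1 h2; simp [swapPair, h1, h2]
  have hs'1 : swapPair s i (i-1) = 1 := by simp [swapPair, hs1, hs2]
  have hs'2 : swapPair s i i = ⊤ := by simp [swapPair, hii, hs1, hs2]
  have hs'3 : ∀ r, r ≠ i-1 → r ≠ i → swapPair s i r = s r := by
    intro r h1 h2; simp [swapPair, h1, h2]
  -- basic ℕ∞ facts
  have htop1 : ((⊤ : ℕ∞) = 1) ↔ False := by simp
  have hsne1 : ¬ (s (i-1) = 1) := by rw [hs1]; simp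
  have hs'ne : ¬ (swapPair s i i = 1) := by rw [hs'2]; simp
  -- recursions and non-negativity
  have hQnn : ∀ (k : ℕ) (j : ℤ), 0 ≤ Q j k := fun k j => qlen_nonneg (hQ j k)
  have hQ'nn : ∀ (k : ℕ) (j : ℤ), 0 ≤ Q' j k := fun k j => qlen_nonneg (hQ' j k)
  have hrecQ : ∀ (k : ℕ) (j : ℤ), Q j k =
      max 0 (Q (j-1) k + ((if a j ≤ (k:ℕ∞) then 1 else 0) - (if s j = 1 then 1 else 0))) :=
    fun k j => qlen_unique (hQ j k) (qlen_rec (hQ (j-1) k))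
  have hrecQ' : ∀ (k : ℕ) (j : ℤ), Q' j k =
      max 0 (Q' (j-1) k + ((if swapPair a i j ≤ (k:ℕ∞) then 1 else 0)
        - (if swapPair s i j = 1 then 1 else 0))) :=
    fun k j => qlen_unique (hQ' j k) (qlen_rec (hQ' (j-1) k))
  -- low regime : Q' = Q for j ≤ i-2
  have hQeq_low : ∀ (k : ℕ) (j : ℤ), j ≤ i-2 → Q' j k = Q j k := by
    intro k j hj
    refine qlen_unique (qlen_congr (fun r hr => ha'3 r (by omega) (by omega))
      (fun r hr => hs'3 r (by omega) (by omega)) (hQ' j k)) (hQ j k)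
  have e2 : (i : ℤ) - 1 - 1 = i - 2 := by ring
  -- Q at i-1
  have hQi1 : ∀ k : ℕ, Q (i-1) k = Q (i-2) k + (if a (i-1) ≤ (k:ℕ∞) then 1 else 0) := by
    intro k
    have h := hrecQ k (i-1)
    rw [e2, if_neg hsne1] at h
    have := hQnn k (i-2)
    rw [h]; split_ifs <;> omega
  -- Q' at i-1
  have hQ'i1 : ∀ k : ℕ, Q' (i-1) k =
      max 0 (Q (i-2) k + ((if min (a (i-1)) (a i) ≤ (k:ℕ∞) then 1 else 0) - 1)) := by
    intro k
    have h := hrecQ' k (i-1)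
    rw [e2, hQeq_low k (i-2) le_rfl, ha'1, hs'1, if_pos rfl] at h
    exact h
  -- Q' = Q at i
  have hQieq : ∀ k : ℕ, Q' i k = Q i k := by
    intro k
    have h1 := hrecQ' k i
    rw [ha'2, if_neg hs'ne, hQ'i1 k] at h1
    have h3 := hrecQ k i
    rw [if_pos hs2, hQi1 k] at h3
    have hn := hQnn k (i-2)
    have hmin : (min (a (i-1)) (a i) ≤ (k:ℕ∞)) ↔ (a (i-1) ≤ (k:ℕ∞) ∨ a i ≤ (k:ℕ∞)) :=
      min_le_iff
    have hmax : (max (a (i-1)) (a i) ≤ (k:ℕ∞)) ↔ (a (i-1) ≤ (k:ℕ∞) ∧ a i ≤ (k:ℕ∞)) :=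
      max_le_iff
    rw [if_congr hmin rfl rfl] at h1
    rw [if_congr hmax rfl rfl] at h1
    rw [h1, h3]
    by_cases hα : a (i-1) ≤ (k:ℕ∞) <;> by_cases hβ : a i ≤ (k:ℕ∞) <;>
      split_ifs <;> first | omega | tauto
  -- high regime
  have hQeq_high : ∀ (k : ℕ) (j : ℤ), i ≤ j → Q' j k = Q j k := by
    intro k
    refine Int.le_induction (hQieq k) ?_
    intro j hj IH
    have h1 := hrecQ' k (j+1)
    have h2 := hrecQ k (j+1)
    rw [show (j : ℤ) + 1 - 1 = j from by ring] at h1 h2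
    rw [ha'3 (j+1) (by omega) (by omega), hs'3 (j+1) (by omega) (by omega), IH] at h1
    rw [h1, h2]
  have hQeq : ∀ (k : ℕ) (j : ℤ), j ≠ i-1 → Q' j k = Q j k := by
    intro k j hj
    rcases le_or_gt j (i-2) with h | h
    · exact hQeq_low k j h
    · exact hQeq_high k j (by omega)
  -- d (i-1) = ⊤, d i ≠ ⊤
  have hdi1 : d (i-1) = ⊤ := (hcond (i-1)).1.mpr hs1
  have hdine : d i ≠ ⊤ := by
    intro h
    have := (hcond i).1.mp h
    rw [hs2] at this
    simp at this
  funext j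
  by_cases hj1 : j = i
  · rw [hj1]
    have hd'i : d' i = ⊤ := (hcond' i).1.mpr hs'2
    have : swapPair d i i = max (d (i-1)) (d i) := by simp [swapPair, hii]
    rw [hd'i, this, hdi1]
    exact (max_eq_left le_top).symm
  by_cases hj2 : j = i - 1
  · rw [hj2]
    have hsw : swapPair d i (i-1) = d i := by
      simp [swapPair, hdi1]
    rw [hsw]
    -- d' (i-1) vs d i
    have hd'ne : d' (i-1) ≠ ⊤ := by
      intro h
      have := (hcond' (i-1)).1.mp h
      rw [hs'1] at this
      simp at this
    have hrange1 : (1:ℕ∞) ≤ d' (i-1) ∧ d' (i-1) ≤ ((m+1 : ℕ):ℕ∞) := by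
      rcases (hcond' (i-1)).2.2.2 with h | h
      · exact absurd h hd'ne
      · exact h
    have hrange2 : (1:ℕ∞) ≤ d i ∧ d i ≤ ((m+1 : ℕ):ℕ∞) := by
      rcases (hcond i).2.2.2 with h | h
      · exact absurd h hdine
      · exact h
    refine val_eq m (d' (i-1)) (d i)
      (fun k => 0 < Q (i-2) k ∨ a (i-1) ≤ (k:ℕ∞) ∨ a i ≤ (k:ℕ∞))
      hd'ne hdine ?_ ?_ hrange1.1 hrange1.2 hrange2.1 hrange2.2
    · intro k h1 h2
      have h := (hcond' (i-1)).2.1 k h1 h2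
      rw [e2, hs'1, hQeq_low k (i-2) le_rfl, ha'1] at h
      rw [h]
      have hmin : (min (a (i-1)) (a i) ≤ (k:ℕ∞)) ↔ (a (i-1) ≤ (k:ℕ∞) ∨ a i ≤ (k:ℕ∞)) :=
        min_le_iff
      constructor
      · rintro ⟨-, h⟩
        rcases h with h | h
        · exact Or.inl h
        · exact Or.inr (hmin.mp h)
      · intro h
        refine ⟨rfl, ?_⟩
        rcases h with h | h
        · exact Or.inl h
        · exact Or.inr (hmin.mpr h)
    · intro k h1 h2
      have h := (hcond i).2.1 k h1 h2
      rw [hQi1 k] at h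
      rw [h]
      have hn := hQnn k (i-2)
      constructor
      · rintro ⟨-, h⟩
        by_cases hα : a (i-1) ≤ (k:ℕ∞)
        · rcases h with h | h
          · rw [if_pos hα] at h
            by_cases hq : 0 < Q (i-2) k
            · exact Or.inl hq
            · exact Or.inr (Or.inl hα)
          · exact Or.inr (Or.inr h)
        · rcases h with h | h
          · rw [if_neg hα] at h
            exact Or.inl (by omega)
          · exact Or.inr (Or.inr h)
      · intro h
        refine ⟨hs2, ?_⟩
        rcases h with h | h | h
        · exact Or.inl (by split_ifs <;> omega)
        · exact Or.inl (by rw [if_pos h]; omega)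
        · exact Or.inr h
  · -- j ∉ {i-1, i}
    have hsw : swapPair d i j = d j := by simp [swapPair, hj1, hj2]
    rw [hsw]
    have hsj : swapPair s i j = s j := hs'3 j hj2 hj1
    have haj : swapPair a i j = a j := ha'3 j hj2 hj1
    rcases hs j with hsv | hsv
    · -- s j = 1 : both finite, same conditions
      have hd'ne : d' j ≠ ⊤ := by
        intro h
        have := (hcond' j).1.mp h
        rw [hsj, hsv] at this
        simp at this
      have hdne : d j ≠ ⊤ := by
        intro h
        have := (hcond j).1.mp h
        rw [hsv] at this
        simp at this
      have hrange1 : (1:ℕ∞) ≤ d' j ∧ d' j ≤ ((m+1 : ℕ):ℕ∞) := by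
        rcases (hcond' j).2.2.2 with h | h
        · exact absurd h hd'ne
        · exact h
      have hrange2 : (1:ℕ∞) ≤ d j ∧ d j ≤ ((m+1 : ℕ):ℕ∞) := by
        rcases (hcond j).2.2.2 with h | h
        · exact absurd h hdne
        · exact h
      refine val_eq m (d' j) (d j)
        (fun k => 0 < Q (j-1) k ∨ a j ≤ (k:ℕ∞))
        hd'ne hdne ?_ ?_ hrange1.1 hrange1.2 hrange2.1 hrange2.2
      · intro k h1 h2
        have h := (hcond' j).2.1 k h1 h2
        rw [hsj, haj, hQeq k (j-1) (by omega)] at h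
        rw [h, hsv]
        tauto
      · intro k h1 h2
        have h := (hcond j).2.1 k h1 h2
        rw [h, hsv]
        tauto
    · -- s j = ⊤ : both ⊤
      have h1 : d' j = ⊤ := (hcond' j).1.mpr (by rw [hsj, hsv])
      have h2 : d j = ⊤ := (hcond j).1.mpr hsv
      rw [h1, h2]
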